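/- If L is a pm-algebra with 0 ≠ 1 that is subdirectly irreducible, then Body(L), the set of prime filters of L that are neither maximal nor minimal, has at most two elements. -/

import Mathlib

/-- A pseudocomplemented De Morgan algebra (pm-algebra): a bounded distributive
lattice with a De Morgan involution `dm` and a pseudocomplement `pc`. -/
class PMAlgebra (L : Type*) extends DistribLattice L, BoundedOrder L where
  dm : L → L
  pc : L → L
  dm_dm : ∀ a : L, dm (dm a) = a
  dm_inf : ∀ a b : L, dm (a ⊓ b) = dm a ⊔ dm b
  pc_iff : ∀ a b : L, a ⊓ b = ⊥ ↔ b ≤ pc a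

namespace PMAlgebra

variable {L : Type*} [PMAlgebra L]

/-- A congruence of a pm-algebra. -/
def IsCongruence (θ : L → L → Prop) : Prop :=
  Equivalence θ ∧
  (∀ a b c d : L, θ a b → θ c d → θ (a ⊓ c) (b ⊓ d)) ∧
  (∀ a b c d : L, θ a b → θ c d → θ (a ⊔ c) (b ⊔ d)) ∧
  (∀ a b : L, θ a b → θ (dm a) (dm b)) ∧
  (∀ a b : L, θ a b → θ (pc a) (pc b))

/-- `L` is simple: it has more than one element and its only congruences are
equality and the total relation. -/
def Simple (L : Type*) [PMAlgebra L] : Prop :=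
  Nontrivial L ∧ ∀ θ : L → L → Prop, IsCongruence θ →
    θ = (fun a b => a = b) ∨ θ = (fun _ _ => True)

/-- `L` is subdirectly irreducible: there is a congruence `μ ≠ Eq` contained in
every congruence different from equality. -/
def SubdirectlyIrreducible (L : Type*) [PMAlgebra L] : Prop :=
  ∃ μ : L → L → Prop, IsCongruence μ ∧ μ ≠ (fun a b => a = b) ∧
    ∀ θ : L → L → Prop, IsCongruence θ → θ ≠ (fun a b => a = b) →
      ∀ a b : L, μ a b → θ a b

/-- A prime filter of the underlying lattice of `L`. -/
def IsPrimeFilter (P : Set L) : Prop :=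
  P.Nonempty ∧ P ≠ Set.univ ∧
  (∀ a b : L, a ∈ P → a ≤ b → b ∈ P) ∧
  (∀ a b : L, a ∈ P → b ∈ P → a ⊓ b ∈ P) ∧
  (∀ a b : L, a ⊔ b ∈ P → a ∈ P ∨ b ∈ P)

/-- The Birula–Rasiowa transformation. -/
def phi (P : Set L) : Set L := {a : L | dm a ∉ P}

/-- `P` is a maximal prime filter. -/
def IsMaximalPF (P : Set L) : Prop :=
  IsPrimeFilter P ∧ ∀ Q : Set L, IsPrimeFilter Q → P ⊆ Q → Q = P

/-- `P` is a minimal prime filter. -/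
def IsMinimalPF (P : Set L) : Prop :=
  IsPrimeFilter P ∧ ∀ Q : Set L, IsPrimeFilter Q → Q ⊆ P → Q = P

/-- The body of `L`: prime filters that are neither maximal nor minimal. -/
def body (L : Type*) [PMAlgebra L] : Set (Set L) :=
  {P : Set L | IsPrimeFilter P ∧ ¬ IsMaximalPF P ∧ ¬ IsMinimalPF P}

/-- The prime filter space of `L` is φ-connected. -/
def PhiConnected (L : Type*) [PMAlgebra L] : Prop :=
  ∀ S : Set (Set L), S ⊆ {P : Set L | IsPrimeFilter P} → S.Nonempty →
    (∀ P Q : Set L, P ∈ S → IsPrimeFilter Q → P ⊆ Q → Q ∈ S) →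
    (∀ P Q : Set L, P ∈ S → IsPrimeFilter Q → Q ⊆ P → Q ∈ S) →
    (∀ P : Set L, P ∈ S → phi P ∈ S) →
    S = {P : Set L | IsPrimeFilter P}

/-- The Kleene identity. -/
def Kleene (L : Type*) [PMAlgebra L] : Prop :=
  ∀ a b : L, a ⊓ dm a ≤ b ⊔ dm b

/-- The term `C(x) = (x ∧ x') ∨ (x ∧ x')*`. -/
def C (x : L) : L := (x ⊓ dm x) ⊔ pc (x ⊓ dm x)

/-- The term `T(x) = C(x) ∧ C(x)'`. -/
def T (x : L) : L := C x ⊓ dm (C x)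

end PMAlgebra

open PMAlgebra

namespace BodyAux

open PMAlgebra

variable {L : Type*} [PMAlgebra L]

/-! ### Basic De Morgan / pseudocomplement facts -/

lemma dm_antitone {a b : L} (h : a ≤ b) : dm b ≤ dm a := by
  have h1 : (a ⊓ b : L) = a := inf_eq_left.mpr h
  have h2 := dm_inf a b
  rw [h1] at h2
  rw [h2]; exact le_sup_right

lemma dm_top : dm (⊤ : L) = ⊥ := by
  have h : ∀ x : L, dm (⊤ : L) ≤ x := fun x => by
    have := dm_antitone (le_top : dm x ≤ ⊤)
    rwa [dm_dm] at this
  exact le_bot_iff.mp (h ⊥)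

lemma dm_bot : dm (⊥ : L) = ⊤ := by rw [← dm_top, dm_dm]

lemma dm_sup (a b : L) : dm (a ⊔ b) = dm a ⊓ dm b := by
  have h := dm_inf (dm a) (dm b)
  rw [dm_dm, dm_dm] at h
  rw [← h, dm_dm]

lemma inf_pc_self (a : L) : a ⊓ pc a = ⊥ := (pc_iff a (pc a)).mpr le_rfl

/-! ### Prime filter basics -/

lemma pf_up {P : Set L} (h : IsPrimeFilter P) : ∀ a b : L, a ∈ P → a ≤ b → b ∈ P := h.2.2.1
lemma pf_inf {P : Set L} (h : IsPrimeFilter P) : ∀ a b : L, a ∈ P → b ∈ P → a ⊓ b ∈ P := h.2.2.2.1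
lemma pf_prime {P : Set L} (h : IsPrimeFilter P) : ∀ a b : L, a ⊔ b ∈ P → a ∈ P ∨ b ∈ P := h.2.2.2.2

lemma pf_top {P : Set L} (h : IsPrimeFilter P) : (⊤ : L) ∈ P := by
  obtain ⟨x, hx⟩ := h.1
  exact pf_up h x ⊤ hx le_top

lemma pf_bot {P : Set L} (h : IsPrimeFilter P) : (⊥ : L) ∉ P := fun hb =>
  h.2.1 (Set.eq_univ_of_forall fun x => pf_up h ⊥ x hb bot_le)

lemma pf_mem_inf_iff {P : Set L} (hP : IsPrimeFilter P) {a b : L} :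
    a ⊓ b ∈ P ↔ a ∈ P ∧ b ∈ P :=
  ⟨fun h => ⟨pf_up hP _ _ h inf_le_left, pf_up hP _ _ h inf_le_right⟩,
   fun h => pf_inf hP _ _ h.1 h.2⟩

lemma pf_mem_sup_iff {P : Set L} (hP : IsPrimeFilter P) {a b : L} :
    a ⊔ b ∈ P ↔ a ∈ P ∨ b ∈ P :=
  ⟨pf_prime hP _ _, fun h => h.elim (fun h1 => pf_up hP _ _ h1 le_sup_left)
    (fun h1 => pf_up hP _ _ h1 le_sup_right)⟩

/-! ### phi -/

lemma mem_phi_iff {P : Set L} {a : L} : a ∈ phi P ↔ dm a ∉ P := Iff.rfl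

lemma dm_mem_iff {P : Set L} {a : L} : dm a ∈ P ↔ a ∉ phi P := by
  simp [phi]

lemma phi_phi (P : Set L) : phi (phi P) = P := by
  ext a; simp [phi, dm_dm]

lemma phi_mono {P Q : Set L} (h : P ⊆ Q) : phi Q ⊆ phi P :=
  fun _ ha hP => ha (h hP)

lemma isPrimeFilter_phi {P : Set L} (hP : IsPrimeFilter P) : IsPrimeFilter (phi P) := by
  refine ⟨⟨⊤, ?_⟩, ?_, ?_, ?_, ?_⟩
  · show dm (⊤ : L) ∉ P
    rw [dm_top]; exact pf_bot hP
  · intro h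
    have hb : (⊥ : L) ∈ phi P := h ▸ Set.mem_univ _
    have : dm (⊥ : L) ∉ P := hb
    rw [dm_bot] at this
    exact this (pf_top hP)
  · intro a b ha hab hmem
    exact ha (pf_up hP _ _ hmem (dm_antitone hab))
  · intro a b ha hb
    show dm (a ⊓ b) ∉ P
    rw [dm_inf]
    intro h
    rcases pf_prime hP _ _ h with h1 | h1
    · exact ha h1
    · exact hb h1
  · intro a b hab
    have h : dm (a ⊔ b) ∉ P := hab
    rw [dm_sup] at h
    by_contra hc
    push_neg at hc
    obtain ⟨ha, hb⟩ := hc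
    have ha' : dm a ∈ P := not_not.mp ha
    have hb' : dm b ∈ P := not_not.mp hb
    exact h (pf_inf hP _ _ ha' hb')

end BodyAux
namespace BodyAux

open PMAlgebra

variable {L : Type*} [PMAlgebra L]

/-! ### Prime filter existence (Birkhoff / Zorn) -/

/-- The prime filter separation theorem: a filter `F` disjoint from an ideal `I`
extends to a prime filter disjoint from `I`. -/
lemma prime_extend (F I : Set L) (hFne : F.Nonempty)
    (hFup : ∀ a b : L, a ∈ F → a ≤ b → b ∈ F)
    (hFinf : ∀ a b : L, a ∈ F → b ∈ F → a ⊓ b ∈ F)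
    (hIne : I.Nonempty)
    (hIdown : ∀ a b : L, a ∈ I → b ≤ a → b ∈ I)
    (hIsup : ∀ a b : L, a ∈ I → b ∈ I → a ⊔ b ∈ I)
    (hdisj : ∀ x : L, x ∈ F → x ∉ I) :
    ∃ T : Set L, IsPrimeFilter T ∧ F ⊆ T ∧ ∀ x ∈ T, x ∉ I := by
  classical
  set J𝒥 : Set (Set L) := {J | J.Nonempty ∧ (∀ a b : L, a ∈ J → b ≤ a → b ∈ J) ∧
    (∀ a b : L, a ∈ J → b ∈ J → a ⊔ b ∈ J) ∧ (∀ x ∈ J, x ∉ F)} with hJdef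
  have hI : I ∈ J𝒥 := ⟨hIne, hIdown, hIsup, fun x hx hxF => hdisj x hxF hx⟩
  have hchain : ∀ c ⊆ J𝒥, IsChain (fun x1 x2 => x1 ⊆ x2) c → c.Nonempty →
      ∃ ub ∈ J𝒥, ∀ s ∈ c, s ⊆ ub := by
    intro c hc hch ⟨J0, hJ0⟩
    refine ⟨⋃₀ c, ⟨?_, ?_, ?_, ?_⟩, fun s hs => Set.subset_sUnion_of_mem hs⟩
    · obtain ⟨x, hx⟩ := (hc hJ0).1
      exact ⟨x, Set.mem_sUnion.mpr ⟨J0, hJ0, hx⟩⟩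
    · rintro a b ⟨J, hJ, haJ⟩ hba
      exact ⟨J, hJ, (hc hJ).2.1 a b haJ hba⟩
    · rintro a b ⟨J1, hJ1, haJ⟩ ⟨J2, hJ2, hbJ⟩
      rcases hch.total hJ1 hJ2 with h | h
      · exact ⟨J2, hJ2, (hc hJ2).2.2.1 a b (h haJ) hbJ⟩
      · exact ⟨J1, hJ1, (hc hJ1).2.2.1 a b haJ (h hbJ)⟩
    · rintro x ⟨J, hJ, hxJ⟩
      exact (hc hJ).2.2.2 x hxJ
  obtain ⟨J, hIJ, hJm⟩ := zorn_subset_nonempty J𝒥 hchain I hI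
  have hJ : J ∈ J𝒥 := hJm.1
  -- J is a prime ideal
  have hJprime : ∀ a b : L, a ⊓ b ∈ J → a ∈ J ∨ b ∈ J := by
    intro a b hab
    by_contra hc
    push_neg at hc
    obtain ⟨haJ, hbJ⟩ := hc
    -- the ideal generated by J and z meets F
    have hmeet : ∀ z : L, z ∉ J → ∃ f ∈ F, ∃ j ∈ J, f ≤ j ⊔ z := by
      intro z hzJ
      by_contra hno
      push_neg at hno
      set J' : Set L := {t | ∃ j ∈ J, t ≤ j ⊔ z} with hJ'def
      have hJ'mem : J' ∈ J𝒥 := by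
        refine ⟨⟨z, ?_⟩, ?_, ?_, ?_⟩
        · obtain ⟨j0, hj0⟩ := hJ.1
          exact ⟨j0, hj0, le_sup_right⟩
        · rintro a' b' ⟨j, hj, hle⟩ hba
          exact ⟨j, hj, hba.trans hle⟩
        · rintro a' b' ⟨j1, hj1, h1⟩ ⟨j2, hj2, h2⟩
          exact ⟨j1 ⊔ j2, hJ.2.2.1 j1 j2 hj1 hj2,
            sup_le (h1.trans (sup_le (le_sup_left.trans le_sup_left) le_sup_right))
              (h2.trans (sup_le (le_sup_right.trans le_sup_left) le_sup_right))⟩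
        · rintro x ⟨j, hj, hle⟩ hxF
          exact hno x hxF j hj hle
      have hsub : J ⊆ J' := fun j hj => ⟨j, hj, le_sup_left⟩
      have : J' ⊆ J := hJm.2 hJ'mem hsub
      apply hzJ
      apply this
      obtain ⟨j0, hj0⟩ := hJ.1
      exact ⟨j0, hj0, le_sup_right⟩
    obtain ⟨f1, hf1F, j1, hj1, hle1⟩ := hmeet a haJ
    obtain ⟨f2, hf2F, j2, hj2, hle2⟩ := hmeet b hbJ
    have hkey : f1 ⊓ f2 ≤ (j1 ⊔ j2) ⊔ (a ⊓ b) := by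
      have h1 : f1 ⊓ f2 ≤ (j1 ⊔ a) ⊓ (j2 ⊔ b) := inf_le_inf hle1 hle2
      have h2 : (j1 ⊔ a) ⊓ (j2 ⊔ b) ≤ (j1 ⊔ j2) ⊔ (a ⊓ b) := by
        rw [inf_sup_right]
        apply sup_le
        · exact inf_le_left.trans (le_sup_left.trans le_sup_left)
        · rw [inf_sup_left]
          apply sup_le
          · exact inf_le_right.trans (le_sup_right.trans le_sup_left)
          · exact le_sup_right
      exact h1.trans h2
    have hmemJ : (j1 ⊔ j2) ⊔ (a ⊓ b) ∈ J :=
      hJ.2.2.1 _ _ (hJ.2.2.1 j1 j2 hj1 hj2) hab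
    have : f1 ⊓ f2 ∈ J := hJ.2.1 _ _ hmemJ hkey
    exact hJ.2.2.2 _ this (hFinf _ _ hf1F hf2F)
  -- the complement of J works
  refine ⟨{x | x ∉ J}, ⟨?_, ?_, ?_, ?_, ?_⟩, ?_, ?_⟩
  · obtain ⟨f, hf⟩ := hFne
    exact ⟨f, fun hfJ => hJ.2.2.2 f hfJ hf⟩
  · intro h
    obtain ⟨j, hj⟩ := hJ.1
    have : j ∈ {x : L | x ∉ J} := h ▸ Set.mem_univ _
    exact this hj
  · intro a b ha hab hbJ
    exact ha (hJ.2.1 b a hbJ hab)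
  · intro a b ha hb hab
    rcases hJprime a b hab with h | h
    · exact ha h
    · exact hb h
  · intro a b hab
    by_contra hc
    push_neg at hc
    obtain ⟨ha, hb⟩ := hc
    exact hab (hJ.2.2.1 a b (not_not.mp ha) (not_not.mp hb))
  · exact fun f hf hfJ => hJ.2.2.2 f hfJ hf
  · intro x hx hxI
    exact hx (hIJ hxI)

lemma prime_of_not_le {a b : L} (h : ¬ a ≤ b) :
    ∃ T : Set L, IsPrimeFilter T ∧ a ∈ T ∧ b ∉ T := by
  obtain ⟨T, hT, hFT, hTI⟩ := prime_extend {x : L | a ≤ x} {x : L | x ≤ b}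
    ⟨a, le_rfl⟩ (fun x y hx hxy => hx.trans hxy) (fun x y hx hy => le_inf hx hy)
    ⟨b, le_rfl⟩ (fun x y hx hyx => hyx.trans hx) (fun x y hx hy => sup_le hx hy)
    (fun x hax hxb => h (hax.trans hxb))
  exact ⟨T, hT, hFT le_rfl, fun hbT => hTI b hbT le_rfl⟩

lemma prime_of_proper (F : Set L) (hFne : F.Nonempty)
    (hFup : ∀ a b : L, a ∈ F → a ≤ b → b ∈ F)
    (hFinf : ∀ a b : L, a ∈ F → b ∈ F → a ⊓ b ∈ F)
    (hbot : (⊥ : L) ∉ F) :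
    ∃ T : Set L, IsPrimeFilter T ∧ F ⊆ T := by
  obtain ⟨T, hT, hFT, _⟩ := prime_extend F {x : L | x ≤ ⊥} hFne hFup hFinf
    ⟨⊥, le_rfl⟩ (fun x y hx hyx => hyx.trans hx) (fun x y hx hy => sup_le hx hy)
    (fun x hxF hxb => hbot (le_bot_iff.mp hxb ▸ hxF))
  exact ⟨T, hT, hFT⟩

lemma exists_maximal_above {T : Set L} (hT : IsPrimeFilter T) :
    ∃ M : Set L, IsMaximalPF M ∧ T ⊆ M := by
  classical
  set S : Set (Set L) := {Q | IsPrimeFilter Q ∧ T ⊆ Q} with hS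
  have hchain : ∀ c ⊆ S, IsChain (fun x1 x2 => x1 ⊆ x2) c → c.Nonempty →
      ∃ ub ∈ S, ∀ s ∈ c, s ⊆ ub := by
    intro c hc hch ⟨Q0, hQ0⟩
    refine ⟨⋃₀ c, ⟨⟨?_, ?_, ?_, ?_, ?_⟩, ?_⟩, fun s hs => Set.subset_sUnion_of_mem hs⟩
    · obtain ⟨x, hx⟩ := (hc hQ0).1.1
      exact ⟨x, Set.mem_sUnion.mpr ⟨Q0, hQ0, hx⟩⟩
    · intro h
      have : (⊥ : L) ∈ ⋃₀ c := h ▸ Set.mem_univ _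
      obtain ⟨Q, hQ, hbQ⟩ := this
      exact pf_bot (hc hQ).1 hbQ
    · rintro a b ⟨Q, hQ, haQ⟩ hab
      exact ⟨Q, hQ, pf_up (hc hQ).1 a b haQ hab⟩
    · rintro a b ⟨Q1, hQ1, haQ⟩ ⟨Q2, hQ2, hbQ⟩
      rcases hch.total hQ1 hQ2 with h | h
      · exact ⟨Q2, hQ2, pf_inf (hc hQ2).1 a b (h haQ) hbQ⟩
      · exact ⟨Q1, hQ1, pf_inf (hc hQ1).1 a b haQ (h hbQ)⟩
    · rintro a b ⟨Q, hQ, habQ⟩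
      rcases pf_prime (hc hQ).1 a b habQ with h | h
      · exact Or.inl ⟨Q, hQ, h⟩
      · exact Or.inr ⟨Q, hQ, h⟩
    · exact ((hc hQ0).2).trans (Set.subset_sUnion_of_mem hQ0)
  obtain ⟨M, hTM, hM⟩ := zorn_subset_nonempty S hchain T ⟨hT, subset_rfl⟩
  refine ⟨M, ⟨hM.1.1, fun Q hQ hMQ => ?_⟩, hM.1.2⟩
  exact Set.Subset.antisymm (hM.2 ⟨hQ, hM.1.2.trans hMQ⟩ hMQ) hMQ

lemma max_mem_or_pc {M : Set L} (hM : IsMaximalPF M) (a : L) :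
    a ∈ M ∨ pc a ∈ M := by
  by_contra hc
  push_neg at hc
  obtain ⟨ha, hpa⟩ := hc
  set F : Set L := {x | ∃ m ∈ M, m ⊓ a ≤ x} with hF
  have hMF : M ⊆ F := fun m hm => ⟨m, hm, inf_le_left⟩
  have haF : a ∈ F := ⟨⊤, pf_top hM.1, inf_le_right⟩
  have hbot : (⊥ : L) ∉ F := by
    rintro ⟨m, hm, hle⟩
    have h1 : a ⊓ m = ⊥ := by
      rw [inf_comm]; exact le_bot_iff.mp hle
    have h2 : m ≤ pc a := (pc_iff a m).mp h1
    exact hpa (pf_up hM.1 m _ hm h2)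
  obtain ⟨Q, hQ, hFQ⟩ := prime_of_proper F ⟨a, haF⟩
    (by rintro x y ⟨m, hm, hle⟩ hxy; exact ⟨m, hm, hle.trans hxy⟩)
    (by rintro x y ⟨m1, hm1, h1⟩ ⟨m2, hm2, h2⟩
        exact ⟨m1 ⊓ m2, pf_inf hM.1 _ _ hm1 hm2,
          le_inf ((inf_le_inf_right a inf_le_left).trans h1)
            ((inf_le_inf_right a inf_le_right).trans h2)⟩)
    hbot
  have hQM : Q = M := hM.2 Q hQ (hMF.trans hFQ)
  exact ha (hQM ▸ hFQ haF)

lemma pc_mem_iff {T : Set L} (hT : IsPrimeFilter T) (a : L) :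
    pc a ∈ T ↔ ∀ M : Set L, IsMaximalPF M → T ⊆ M → a ∉ M := by
  constructor
  · intro hpc M hM hTM haM
    have h1 : a ⊓ pc a ∈ M := pf_inf hM.1 _ _ haM (hTM hpc)
    rw [inf_pc_self] at h1
    exact pf_bot hM.1 h1
  · intro h
    by_contra hpc
    set F : Set L := {x | ∃ t ∈ T, t ⊓ a ≤ x} with hF
    have hTF : T ⊆ F := fun t ht => ⟨t, ht, inf_le_left⟩
    have haF : a ∈ F := ⟨⊤, pf_top hT, inf_le_right⟩
    have hbot : (⊥ : L) ∉ F := by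
      rintro ⟨t, ht, hle⟩
      have h1 : a ⊓ t = ⊥ := by
        rw [inf_comm]; exact le_bot_iff.mp hle
      exact hpc (pf_up hT t _ ht ((pc_iff a t).mp h1))
    obtain ⟨Q, hQ, hFQ⟩ := prime_of_proper F ⟨a, haF⟩
      (by rintro x y ⟨t, ht, hle⟩ hxy; exact ⟨t, ht, hle.trans hxy⟩)
      (by rintro x y ⟨t1, ht1, h1⟩ ⟨t2, ht2, h2⟩
          exact ⟨t1 ⊓ t2, pf_inf hT _ _ ht1 ht2,
            le_inf ((inf_le_inf_right a inf_le_left).trans h1)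
              ((inf_le_inf_right a inf_le_right).trans h2)⟩)
      hbot
    obtain ⟨M, hM, hQM⟩ := exists_maximal_above hQ
    exact h M hM ((hTF.trans hFQ).trans hQM) (hQM (hFQ haF))

end BodyAux
namespace BodyAux

open PMAlgebra

variable {L : Type*} [PMAlgebra L]

/-! ### Congruences from sets of prime filters -/

def theta (S : Set (Set L)) : L → L → Prop := fun a b => ∀ P ∈ S, (a ∈ P ↔ b ∈ P)

lemma theta_isCongruence (S : Set (Set L))
    (hpf : ∀ P ∈ S, IsPrimeFilter P)
    (hphiS : ∀ P ∈ S, phi P ∈ S)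
    (hmaxS : ∀ M : Set L, IsMaximalPF M → M ∈ S) :
    IsCongruence (theta S) := by
  refine ⟨⟨fun a P hP => Iff.rfl, fun h P hP => (h P hP).symm,
    fun h1 h2 P hP => (h1 P hP).trans (h2 P hP)⟩, ?_, ?_, ?_, ?_⟩
  · intro a b c d h1 h2 P hP
    rw [pf_mem_inf_iff (hpf P hP), pf_mem_inf_iff (hpf P hP), h1 P hP, h2 P hP]
  · intro a b c d h1 h2 P hP
    rw [pf_mem_sup_iff (hpf P hP), pf_mem_sup_iff (hpf P hP), h1 P hP, h2 P hP]
  · intro a b h P hP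
    rw [dm_mem_iff, dm_mem_iff]
    exact not_congr (h (phi P) (hphiS P hP))
  · intro a b h P hP
    rw [pc_mem_iff (hpf P hP), pc_mem_iff (hpf P hP)]
    exact ⟨fun hall M hM hPM hbM => hall M hM hPM ((h M (hmaxS M hM)).mpr hbM),
      fun hall M hM hPM haM => hall M hM hPM ((h M (hmaxS M hM)).mp haM)⟩

lemma theta_ne_eq {θ : L → L → Prop} {a b : L} (h : θ a b) (hne : a ≠ b) :
    θ ≠ (fun a b => a = b) := by
  intro he
  rw [he] at h
  exact hne h

lemma exists_ne_of_ne_eq {μ : L → L → Prop} (hrefl : ∀ a : L, μ a a)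
    (hne : μ ≠ (fun a b => a = b)) : ∃ c d : L, μ c d ∧ c ≠ d := by
  by_contra h
  push_neg at h
  exact hne (funext fun a => funext fun b => propext
    ⟨fun hab => h a b hab, fun e => e ▸ hrefl a⟩)

/-! ### phi, maximality and minimality -/

lemma isMaximalPF_phi {m : Set L} (h : IsMinimalPF m) : IsMaximalPF (phi m) := by
  refine ⟨isPrimeFilter_phi h.1, fun Q hQ hsub => ?_⟩
  have h2 : phi Q ⊆ phi (phi m) := phi_mono hsub
  rw [phi_phi] at h2
  have h3 : phi Q = m := h.2 (phi Q) (isPrimeFilter_phi hQ) h2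
  calc Q = phi (phi Q) := (phi_phi Q).symm
    _ = phi m := by rw [h3]

lemma isMinimalPF_phi {M : Set L} (h : IsMaximalPF M) : IsMinimalPF (phi M) := by
  refine ⟨isPrimeFilter_phi h.1, fun Q hQ hsub => ?_⟩
  have h2 : phi (phi M) ⊆ phi Q := phi_mono hsub
  rw [phi_phi] at h2
  have h3 : phi Q = M := h.2 (phi Q) (isPrimeFilter_phi hQ) h2
  calc Q = phi (phi Q) := (phi_phi Q).symm
    _ = phi M := by rw [h3]

lemma phi_mem_body {P : Set L} (h : P ∈ body L) : phi P ∈ body L := by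
  obtain ⟨hpf, hnmax, hnmin⟩ := h
  refine ⟨isPrimeFilter_phi hpf, ?_, ?_⟩
  · intro hmax
    apply hnmin
    have := isMinimalPF_phi hmax
    rwa [phi_phi] at this
  · intro hmin
    apply hnmax
    have := isMaximalPF_phi hmin
    rwa [phi_phi] at this

/-! ### Witnesses for body prime filters -/

lemma witness_not_max {P : Set L} (hP : IsPrimeFilter P) (h : ¬ IsMaximalPF P) :
    ∃ u : L, u ∉ P ∧ ∀ M : Set L, IsMaximalPF M → u ∈ M := by
  have hQ : ∃ Q : Set L, IsPrimeFilter Q ∧ P ⊆ Q ∧ Q ≠ P := by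
    by_contra hc
    push_neg at hc
    exact h ⟨hP, fun Q hQ hPQ => hc Q hQ hPQ⟩
  obtain ⟨Q, hQ, hPQ, hQP⟩ := hQ
  have ha : ∃ a : L, a ∈ Q ∧ a ∉ P := by
    by_contra hc
    push_neg at hc
    exact hQP (Set.Subset.antisymm hc hPQ)
  obtain ⟨a, haQ, haP⟩ := ha
  refine ⟨a ⊔ pc a, ?_, ?_⟩
  · intro hu
    rcases pf_prime hP _ _ hu with h1 | h1
    · exact haP h1
    · have h2 : a ⊓ pc a ∈ Q := pf_inf hQ _ _ haQ (hPQ h1)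
      rw [inf_pc_self] at h2
      exact pf_bot hQ h2
  · intro M hM
    rcases max_mem_or_pc hM a with h1 | h1
    · exact pf_up hM.1 _ _ h1 le_sup_left
    · exact pf_up hM.1 _ _ h1 le_sup_right

lemma body_witness_u {R : Set L} (hR : R ∈ body L) :
    ∃ u : L, u ∉ R ∧ ∀ M : Set L, IsMaximalPF M → u ∈ M :=
  witness_not_max hR.1 hR.2.1

lemma body_witness_s {R : Set L} (hR : R ∈ body L) :
    ∃ s : L, s ∈ R ∧ ∀ m : Set L, IsMinimalPF m → s ∉ m := by
  obtain ⟨hRpf, _, hnmin⟩ := hR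
  have hphiR : ¬ IsMaximalPF (phi R) := by
    intro hmax
    apply hnmin
    have := isMinimalPF_phi hmax
    rwa [phi_phi] at this
  obtain ⟨w, hw, hwmax⟩ := witness_not_max (isPrimeFilter_phi hRpf) hphiR
  refine ⟨dm w, ?_, ?_⟩
  · rw [dm_mem_iff]
    exact hw
  · intro m hm
    have hwm : w ∈ phi m := hwmax _ (isMaximalPF_phi hm)
    exact hwm

end BodyAux
namespace BodyAux

open PMAlgebra

variable {L : Type*} [PMAlgebra L]

lemma exists_sep {a b : L} (h : a ≠ b) :
    ∃ T : Set L, IsPrimeFilter T ∧ ¬ (a ∈ T ↔ b ∈ T) := by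
  have hle : ¬ a ≤ b ∨ ¬ b ≤ a := by
    by_contra hc
    push_neg at hc
    exact h (le_antisymm hc.1 hc.2)
  rcases hle with h1 | h1
  · obtain ⟨T, hT, haT, hbT⟩ := prime_of_not_le h1
    exact ⟨T, hT, fun hiff => hbT (hiff.mp haT)⟩
  · obtain ⟨T, hT, hbT, haT⟩ := prime_of_not_le h1
    exact ⟨T, hT, fun hiff => haT (hiff.mpr hbT)⟩

/-- Cutting a pair: given a pair `(a, b)` that differs at `R`, produce a pair with
smaller separating set that agrees at `Z`. -/
lemma cut {R Z : Set L} (hR : IsPrimeFilter R) (hZ : IsPrimeFilter Z) (hRZ : R ≠ Z)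
    {a b : L} (hab : a ≤ b) (hbR : b ∈ R) (haR : a ∉ R) :
    ∃ a' b' : L, a' ≤ b' ∧ b' ∈ R ∧ a' ∉ R ∧ (a' ∈ Z ↔ b' ∈ Z) ∧
      ∀ T : Set L, IsPrimeFilter T → ¬ (a' ∈ T ↔ b' ∈ T) → ¬ (a ∈ T ↔ b ∈ T) := by
  have hz : (∃ z : L, z ∈ R ∧ z ∉ Z) ∨ (∃ z : L, z ∈ Z ∧ z ∉ R) := by
    by_contra hc
    push_neg at hc
    exact hRZ (Set.Subset.antisymm hc.1 hc.2)
  rcases hz with ⟨z, hzR, hzZ⟩ | ⟨z, hzZ, hzR⟩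
  · refine ⟨a, a ⊔ (b ⊓ z), le_sup_left, ?_, haR, ?_, ?_⟩
    · exact pf_up hR _ _ (pf_inf hR _ _ hbR hzR) le_sup_right
    · constructor
      · intro h; exact pf_up hZ _ _ h le_sup_left
      · intro h
        rcases pf_prime hZ _ _ h with h1 | h1
        · exact h1
        · exact (hzZ (pf_up hZ _ _ h1 inf_le_right)).elim
    · intro T hT hne hiff
      apply hne
      constructor
      · intro h; exact pf_up hT _ _ h le_sup_left
      · intro h
        rcases pf_prime hT _ _ h with h1 | h1
        · exact h1
        · exact hiff.mpr (pf_up hT _ _ h1 inf_le_left)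
  · refine ⟨(a ⊔ z) ⊓ b, b, inf_le_right, hbR, ?_, ?_, ?_⟩
    · intro h
      rcases pf_prime hR _ _ (pf_up hR _ _ h inf_le_left) with h1 | h1
      · exact haR h1
      · exact hzR h1
    · constructor
      · intro h; exact pf_up hZ _ _ h inf_le_right
      · intro h
        exact pf_inf hZ _ _ (pf_up hZ _ _ hzZ le_sup_right) h
    · intro T hT hne hiff
      apply hne
      constructor
      · intro h; exact pf_up hT _ _ h inf_le_right
      · intro h
        exact pf_inf hT _ _ (pf_up hT _ _ (hiff.mpr h) le_sup_left) h

lemma sep_body {s u : L}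
    (hu : ∀ M : Set L, IsMaximalPF M → u ∈ M)
    (hs : ∀ m : Set L, IsMinimalPF m → s ∉ m)
    {T : Set L} (hT : IsPrimeFilter T) (hne : ¬ (s ⊓ u ∈ T ↔ s ∈ T)) :
    T ∈ body L := by
  have hsu : s ⊓ u ∉ T := by
    intro h
    exact hne ⟨fun _ => pf_up hT _ _ h inf_le_left, fun _ => h⟩
  have hsT : s ∈ T := by
    by_contra h
    exact hne ⟨fun h1 => (hsu h1).elim, fun h1 => (h h1).elim⟩
  have huT : u ∉ T := fun h => hsu (pf_inf hT _ _ hsT h)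
  exact ⟨hT, fun hmax => huT (hu T hmax), fun hmin => hs T hmin hsT⟩

end BodyAux

open BodyAux in
/-- The body of a nontrivial subdirectly irreducible pm-algebra has at most two
elements. -/
theorem body_encard_le_two_of_subdirectlyIrreducible {L : Type*} [PMAlgebra L]
    (hnt : (⊥ : L) ≠ ⊤) (hsi : SubdirectlyIrreducible L) :
    (body L).encard ≤ 2 := by
  classical
  rcases Set.eq_empty_or_nonempty (body L) with hb | ⟨R0, hR0⟩
  · rw [hb, Set.encard_empty]
    exact zero_le
  obtain ⟨μ, hμc, hμne, hμmin⟩ := hsi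
  obtain ⟨c, d, hμcd, hcd⟩ := exists_ne_of_ne_eq hμc.1.refl hμne
  -- The congruence determined by the non-body prime filters.
  set S1 : Set (Set L) := {P | IsPrimeFilter P ∧ P ∉ body L} with hS1def
  have hS1c : IsCongruence (theta S1) := by
    refine theta_isCongruence S1 (fun P hP => hP.1) (fun P hP => ?_) (fun M hM => ?_)
    · refine ⟨isPrimeFilter_phi hP.1, fun hb2 => hP.2 ?_⟩
      have := phi_mem_body hb2
      rwa [phi_phi] at this
    · exact ⟨hM.1, fun hb2 => hb2.2.1 hM⟩
  obtain ⟨u0, hu0R, hu0max⟩ := body_witness_u hR0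
  obtain ⟨s0, hs0R, hs0min⟩ := body_witness_s hR0
  have hθ1ne : theta S1 ≠ (fun a b => a = b) := by
    refine theta_ne_eq (a := s0 ⊓ u0) (b := s0) ?_ ?_
    · intro P hP
      by_contra hne
      exact hP.2 (sep_body hu0max hs0min hP.1 hne)
    · intro heq
      have hle : s0 ≤ u0 := inf_eq_left.mp heq
      exact hu0R (pf_up hR0.1 _ _ hs0R hle)
  have hμS1 : theta S1 c d := hμmin _ hS1c hθ1ne c d hμcd
  -- A body prime filter Q0 separating c and d.
  obtain ⟨Q0, hQ0pf, hQ0sep⟩ := exists_sep hcd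
  have hQ0body : Q0 ∈ body L := by
    by_contra h
    exact hQ0sep (hμS1 Q0 ⟨hQ0pf, h⟩)
  -- Every body prime filter is Q0 or phi Q0.
  have hsub : body L ⊆ {Q0, phi Q0} := by
    intro R hRb
    by_contra hRne
    simp only [Set.mem_insert_iff, Set.mem_singleton_iff] at hRne
    push_neg at hRne
    obtain ⟨u, huR, humax⟩ := body_witness_u hRb
    obtain ⟨s, hsR, hsmin⟩ := body_witness_s hRb
    have ha0R : s ⊓ u ∉ R := fun h => huR (pf_up hRb.1 _ _ h inf_le_right)
    obtain ⟨a1, b1, hab1, hb1R, ha1R, hZ1, hsh1⟩ :=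
      cut hRb.1 hQ0pf hRne.1 (inf_le_left : s ⊓ u ≤ s) hsR ha0R
    obtain ⟨a2, b2, hab2, hb2R, ha2R, hZ2, hsh2⟩ :=
      cut hRb.1 (isPrimeFilter_phi hQ0pf) hRne.2 hab1 hb1R ha1R
    set S0 : Set (Set L) :=
      {P | IsPrimeFilter P ∧ (IsMaximalPF P ∨ IsMinimalPF P ∨ P = Q0 ∨ P = phi Q0)}
      with hS0def
    have hS0c : IsCongruence (theta S0) := by
      refine theta_isCongruence S0 (fun P hP => hP.1) (fun P hP => ?_) (fun M hM => ?_)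
      · refine ⟨isPrimeFilter_phi hP.1, ?_⟩
        rcases hP.2 with h | h | h | h
        · exact Or.inr (Or.inl (isMinimalPF_phi h))
        · exact Or.inl (isMaximalPF_phi h)
        · exact Or.inr (Or.inr (Or.inr (by rw [h])))
        · exact Or.inr (Or.inr (Or.inl (by rw [h, phi_phi])))
      · exact ⟨hM.1, Or.inl hM⟩
    have hθ0ne : theta S0 ≠ (fun a b => a = b) := by
      refine theta_ne_eq (a := a2) (b := b2) ?_ ?_
      · intro P hP
        by_contra hne2
        have hne1 : ¬ (a1 ∈ P ↔ b1 ∈ P) := hsh2 P hP.1 hne2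
        have hne0 : ¬ (s ⊓ u ∈ P ↔ s ∈ P) := hsh1 P hP.1 hne1
        have hPbody : P ∈ body L := sep_body humax hsmin hP.1 hne0
        rcases hP.2 with h | h | h | h
        · exact hPbody.2.1 h
        · exact hPbody.2.2 h
        · exact hne1 (h ▸ hZ1)
        · exact hne2 (h ▸ hZ2)
      · intro heq
        exact ha2R (heq ▸ hb2R)
    have hQ0S0 : Q0 ∈ S0 := ⟨hQ0pf, Or.inr (Or.inr (Or.inl rfl))⟩
    exact hQ0sep (hμmin _ hS0c hθ0ne c d hμcd Q0 hQ0S0)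
  calc (body L).encard ≤ ({Q0, phi Q0} : Set (Set L)).encard := Set.encard_mono hsub
    _ ≤ ({phi Q0} : Set (Set L)).encard + 1 := Set.encard_insert_le _ _
    _ = 2 := by rw [Set.encard_singleton, one_add_one_eq_two]
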